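/- For m ≥ 4, let λ_m = α_m + iβ_m (with β_m > 0) be a non-real root of the indicial polynomial ψ_m(λ) := λ(λ+1)⋯(λ+m−2) − m!. Then |λ_m + m − 1| < m + 1. -/

import Mathlib

lemma aux_strict (a : ℂ) (b : ℝ) (hb : 0 < b) (ha : a.im ≠ 0) :
    ‖a‖ - b < ‖a - b‖ := by
  have h1 : a.re < ‖a‖ :=
    lt_of_le_of_lt (le_abs_self _) ((Complex.abs_re_lt_norm).2 ha)
  have h2 : (‖a - b‖)^2 = (a.re - b)^2 + a.im^2 := by
    rw [Complex.sq_norm, Complex.normSq_apply]; simp; ring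
  have h3 : (‖a‖)^2 = a.re^2 + a.im^2 := by
    rw [Complex.sq_norm, Complex.normSq_apply]; ring
  have h4 : (0:ℝ) ≤ ‖a - b‖ := norm_nonneg _
  nlinarith [sq_nonneg (‖a - b‖ + (‖a‖ - b))]

lemma prod_range_add_two (n : ℕ) :
    ∏ k ∈ Finset.range n, ((k:ℝ) + 2) = (n+1).factorial := by
  induction n with
  | zero => simp
  | succ n ih =>
    rw [Finset.prod_range_succ, ih]
    have : (n+1+1).factorial = (n+2)*(n+1).factorial := Nat.factorial_succ _
    rw [this]; push_cast; ring

theorem stmt_18 (m : ℕ) (hm : 4 ≤ m) (lam : ℂ) (him : 0 < lam.im)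
    (hroot : ∏ k ∈ Finset.range (m-1), (lam + k) = m.factorial) :
    ‖lam + m - 1‖ < m + 1 := by
  by_contra h
  push_neg at h
  have key : ∀ k ∈ Finset.range (m-1), ((k:ℝ) + 2) < ‖lam + k‖ := by
    intro k hk
    rw [Finset.mem_range] at hk
    have hkm : k + 1 < m := by omega
    have hb : (0:ℝ) < ((m:ℝ) - 1 - k) := by
      have : ((k:ℝ) + 1) < m := by exact_mod_cast hkm
      linarith
    have heq : lam + k = (lam + m - 1) - (((m:ℝ) - 1 - k) : ℂ) := by
      push_cast; ring
    have him' : (lam + m - 1).im ≠ 0 := by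
      simp [Complex.add_im, Complex.sub_im]
      linarith
    have := aux_strict (lam + m - 1) ((m:ℝ) - 1 - k) hb him'
    rw [heq]
    calc ((k:ℝ) + 2) = (m + 1) - ((m:ℝ) - 1 - k) := by ring
      _ ≤ ‖lam + m - 1‖ - ((m:ℝ) - 1 - k) := by linarith
      _ < _ := by
          convert this using 3
          push_cast; ring
  have hpos : ∀ k ∈ Finset.range (m-1), (0:ℝ) < ((k:ℝ) + 2) := by
    intro k _; positivity
  have hne : (Finset.range (m-1)).Nonempty := by
    rw [Finset.nonempty_range_iff]; omega
  have hlt : ∏ k ∈ Finset.range (m-1), ((k:ℝ) + 2)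
      < ∏ k ∈ Finset.range (m-1), ‖lam + k‖ :=
    Finset.prod_lt_prod_of_nonempty hpos key hne
  rw [prod_range_add_two] at hlt
  have hm1 : m - 1 + 1 = m := by omega
  rw [hm1] at hlt
  have habs : ∏ k ∈ Finset.range (m-1), ‖lam + k‖ = (m.factorial : ℝ) := by
    rw [← norm_prod, hroot]
    simp [Complex.norm_natCast]
  rw [habs] at hlt
  exact lt_irrefl _ hlt
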